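/- If T is a bounded quasinormal operator on a complex Hilbert space H (i.e., T(T*T) = (T*T)T) and the kernel of T* is contained in the kernel of T, then T is normal. -/

import Mathlib

theorem stmt_0 {H : Type*} [NormedAddCommGroup H] [InnerProductSpace ℂ H] [CompleteSpace H]
    (T : H →L[ℂ] H)
    (hq : T * (ContinuousLinearMap.adjoint T * T) = (ContinuousLinearMap.adjoint T * T) * T)
    (hker : LinearMap.ker ((ContinuousLinearMap.adjoint T : H →L[ℂ] H) : H →ₗ[ℂ] H) ≤ LinearMap.ker (T : H →ₗ[ℂ] H)) :
    ContinuousLinearMap.adjoint T * T = T * ContinuousLinearMap.adjoint T := by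
  set A := ContinuousLinearMap.adjoint T with hA
  set C : H →L[ℂ] H := A * T - T * A with hC
  -- adjoint of hq : A * (A * T) = (A * T) * A
  have hstar : star T = A := by rw [ContinuousLinearMap.star_eq_adjoint, hA]
  have hstarA : star A = T := by
    rw [hA, ContinuousLinearMap.star_eq_adjoint, ContinuousLinearMap.adjoint_adjoint]
  have hq' : A * (A * T) = (A * T) * A := by
    have h := congrArg star hq
    simp only [star_mul, hstar, hstarA] at h
    exact h.symm
  -- C is self-adjoint
  have hCadj : ContinuousLinearMap.adjoint C = C := by
    rw [hC, hA, ← ContinuousLinearMap.star_eq_adjoint, ← ContinuousLinearMap.star_eq_adjoint,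
      star_sub, star_mul, star_mul, star_star]
  have hCsa : ∀ u w : H, (inner ℂ (C u) w : ℂ) = inner ℂ u (C w) := by
    intro u w
    conv_lhs => rw [← hCadj]
    exact ContinuousLinearMap.adjoint_inner_left C w u
  -- C kills ker A
  have hCker : ∀ y, A y = 0 → C y = 0 := by
    intro y hy
    have hy' : T y = 0 := hker (by simpa [LinearMap.mem_ker] using hy)
    simp [hC, hy, hy']
  -- A ∘ C ∘ T = 0
  have hACT : ∀ x, A (C (T x)) = 0 := by
    intro x
    have hop : A * C * T = 0 := by
      rw [hC, mul_sub, sub_mul,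
        show A * (A * T) = A * (T * A) from by rw [hq', mul_assoc], sub_self]
    calc A (C (T x)) = (A * C * T) x := rfl
    _ = 0 := by rw [hop]; rfl
  -- C ∘ T = 0
  have hCT : ∀ x, C (T x) = 0 := by
    intro x
    have h1 : C (C (T x)) = 0 := hCker _ (hACT x)
    have : (inner ℂ (C (T x)) (C (T x)) : ℂ) = 0 := by
      rw [hCsa, h1, inner_zero_right]
    exact inner_self_eq_zero.mp this
  -- ker A = (range T)ᗮ
  have hkerA : LinearMap.ker (A : H →ₗ[ℂ] H) = (LinearMap.range (T : H →ₗ[ℂ] H))ᗮ := by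
    ext y
    simp only [LinearMap.mem_ker, Submodule.mem_orthogonal]
    constructor
    · rintro hy u ⟨x, rfl⟩
      show (inner ℂ (T x) y : ℂ) = 0
      rw [← ContinuousLinearMap.adjoint_inner_right T x y, ← hA, (show A y = 0 from hy), inner_zero_right]
    · intro h
      have h2 : (inner ℂ (T (A y)) y : ℂ) = 0 := h (T (A y)) ⟨A y, rfl⟩
      rw [← ContinuousLinearMap.adjoint_inner_right T (A y) y, ← hA] at h2
      exact inner_self_eq_zero.mp h2
  -- C vanishes on closure of range T = (ker A)ᗮ
  have hclosed : IsClosed (LinearMap.ker (C : H →ₗ[ℂ] H) : Set H) :=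
    ContinuousLinearMap.isClosed_ker C
  have horth : (LinearMap.ker (A : H →ₗ[ℂ] H))ᗮ ≤ LinearMap.ker (C : H →ₗ[ℂ] H) := by
    rw [hkerA, Submodule.orthogonal_orthogonal_eq_closure]
    refine Submodule.topologicalClosure_minimal _ ?_ hclosed
    rintro u ⟨x, rfl⟩
    exact hCT x
  -- conclude
  have hCzero : ∀ x, C x = 0 := by
    intro x
    haveI : CompleteSpace (LinearMap.ker (A : H →ₗ[ℂ] H)) :=
      (ContinuousLinearMap.isClosed_ker A).completeSpace_coe
    obtain ⟨y, hy, z, hz, rfl⟩ :=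
      Submodule.exists_add_mem_mem_orthogonal (K := LinearMap.ker (A : H →ₗ[ℂ] H)) x
    rw [map_add, hCker y (by simpa [LinearMap.mem_ker] using hy), (show C z = 0 from horth hz), zero_add]
  have hC0 : C = 0 := by ext x; exact hCzero x
  exact sub_eq_zero.mp (by rw [← hC]; exact hC0)
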